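/- Let A be m×n, B p×n, W_k an n×k matrix with orthonormal columns, and AW_k = U_k H_k, BW_k = V_k K_k reduced QR decompositions with H_k, K_k invertible. Assume B*B is invertible. Then G = H_k K_k^{-1} is the unique minimizer over k×k matrices G of the (B*B)^{-1}-Frobenius norm of R_3(G) = A*U_k − B*V_k G*, where ‖Y‖_{F,M}² = trace(Y* M Y). -/

import Mathlib

open Matrix
open scoped ComplexOrder

noncomputable section

/-- The `M`-Frobenius norm: `‖Y‖_{F,M}² = trace (Yᴴ M Y)`. -/
def frobM {n k : ℕ} (M : Matrix (Fin n) (Fin n) ℂ) (Y : Matrix (Fin n) (Fin k) ℂ) : ℝ :=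
  Real.sqrt (Matrix.trace (Yᴴ * M * Y)).re

lemma trace_nonneg_of_posSemidef {n : ℕ} {X : Matrix (Fin n) (Fin n) ℂ}
    (hX : X.PosSemidef) : 0 ≤ X.trace := by
  rw [Matrix.trace]
  apply Finset.sum_nonneg
  intro i _
  have h := hX.dotProduct_mulVec_nonneg (Pi.single i 1)
  simpa [← Pi.single_star, single_dotProduct] using h

lemma trace_conjTranspose_mul_self_re {n k : ℕ} (D : Matrix (Fin n) (Fin k) ℂ) :
    (Matrix.trace (Dᴴ * D)).re = ∑ i, ∑ j, Complex.normSq (D j i) := by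
  simp [Matrix.trace, Matrix.diag, Matrix.mul_apply, Complex.re_sum,
    ← Complex.normSq_eq_conj_mul_self]

theorem stmt3 {m p n k : ℕ}
    (A : Matrix (Fin m) (Fin n) ℂ) (B : Matrix (Fin p) (Fin n) ℂ)
    (W : Matrix (Fin n) (Fin k) ℂ) (hW : Wᴴ * W = 1)
    (U : Matrix (Fin m) (Fin k) ℂ) (hU : Uᴴ * U = 1)
    (V : Matrix (Fin p) (Fin k) ℂ) (hV : Vᴴ * V = 1)
    (H K : Matrix (Fin k) (Fin k) ℂ)
    (hA : A * W = U * H) (hB : B * W = V * K)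
    (hH : IsUnit H) (hK : IsUnit K)
    (hBB : (Bᴴ * B).PosDef) :
    ∀ G : Matrix (Fin k) (Fin k) ℂ,
      frobM (Bᴴ * B)⁻¹ (Aᴴ * U - Bᴴ * V * (H * K⁻¹)ᴴ) ≤ frobM (Bᴴ * B)⁻¹ (Aᴴ * U - Bᴴ * V * Gᴴ) ∧
        (frobM (Bᴴ * B)⁻¹ (Aᴴ * U - Bᴴ * V * Gᴴ) = frobM (Bᴴ * B)⁻¹ (Aᴴ * U - Bᴴ * V * (H * K⁻¹)ᴴ)
          → G = H * K⁻¹) := by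
  intro G
  set M : Matrix (Fin n) (Fin n) ℂ := (Bᴴ * B)⁻¹ with hMdef
  have hKd : IsUnit K.det := (Matrix.isUnit_iff_isUnit_det K).mp hK
  have hBBd : IsUnit (Bᴴ * B).det := (Matrix.isUnit_iff_isUnit_det _).mp hBB.isUnit
  have hM : M.PosDef := hBB.inv
  have hMH : Mᴴ = M := hM.isHermitian
  have hVeq : V = B * W * K⁻¹ := by
    rw [hB, Matrix.mul_nonsing_inv_cancel_right _ _ hKd]
  have hBV : Bᴴ * V = Bᴴ * B * W * K⁻¹ := by
    rw [hVeq]; simp only [Matrix.mul_assoc]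
  -- Vᴴ * B * M = (K⁻¹)ᴴ * Wᴴ
  have hVBM : (Bᴴ * V)ᴴ * M = (K⁻¹)ᴴ * Wᴴ := by
    rw [hBV]
    simp only [conjTranspose_mul, conjTranspose_conjTranspose, Matrix.mul_assoc]
    rw [show Bᴴ * (B * M) = 1 from by
      rw [← Matrix.mul_assoc, hMdef, Matrix.mul_nonsing_inv _ hBBd], Matrix.mul_one]
  have hWAU : Wᴴ * (Aᴴ * U) = Hᴴ := by
    have h1 : Wᴴ * Aᴴ = Hᴴ * Uᴴ := by
      rw [← conjTranspose_mul, hA, conjTranspose_mul]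
    rw [← Matrix.mul_assoc, h1, Matrix.mul_assoc, hU, Matrix.mul_one]
  have hWBV : Wᴴ * (Bᴴ * V) = Kᴴ := by
    have h1 : Wᴴ * Bᴴ = Kᴴ * Vᴴ := by
      rw [← conjTranspose_mul, hB, conjTranspose_mul]
    rw [← Matrix.mul_assoc, h1, Matrix.mul_assoc, hV, Matrix.mul_one]
  set N : Matrix (Fin n) (Fin k) ℂ := Bᴴ * V with hNdef
  set G₀ : Matrix (Fin k) (Fin k) ℂ := H * K⁻¹ with hG₀
  set R₀ : Matrix (Fin n) (Fin k) ℂ := Aᴴ * U - N * G₀ᴴ with hR₀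
  have hone : Nᴴ * (M * N) = 1 := by
    rw [← Matrix.mul_assoc, hVBM, Matrix.mul_assoc, hWBV, ← conjTranspose_mul,
      Matrix.mul_nonsing_inv _ hKd, conjTranspose_one]
  have hZ : Nᴴ * (M * R₀) = 0 := by
    rw [hR₀, Matrix.mul_sub, Matrix.mul_sub]
    rw [show Nᴴ * (M * (N * G₀ᴴ)) = (Nᴴ * (M * N)) * G₀ᴴ by simp only [Matrix.mul_assoc],
      hone, Matrix.one_mul]
    rw [← Matrix.mul_assoc, hVBM, Matrix.mul_assoc, hWAU, hG₀, conjTranspose_mul, sub_self]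
  have hZ' : R₀ᴴ * (M * N) = 0 := by
    have h2 := congrArg conjTranspose hZ
    simpa only [conjTranspose_mul, conjTranspose_conjTranspose, hMH, conjTranspose_zero,
      Matrix.mul_assoc, hNdef] using h2
  set D : Matrix (Fin k) (Fin k) ℂ := G₀ᴴ - Gᴴ with hD
  have hRG : Aᴴ * U - N * Gᴴ = R₀ + N * D := by
    rw [hR₀, hD, Matrix.mul_sub]; abel
  have hexp : (R₀ + N * D)ᴴ * M * (R₀ + N * D) = R₀ᴴ * M * R₀ + Dᴴ * D := by
    have e1 : (R₀ + N * D)ᴴ * M * (R₀ + N * D)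
        = R₀ᴴ * M * R₀ + (R₀ᴴ * (M * N)) * D + Dᴴ * (Nᴴ * (M * R₀))
          + (Dᴴ * (Nᴴ * (M * N))) * D := by
      simp only [conjTranspose_add, conjTranspose_mul, Matrix.add_mul, Matrix.mul_add,
        Matrix.mul_assoc]
      abel
    rw [e1, hZ, hZ', hone, Matrix.zero_mul, Matrix.mul_zero, Matrix.mul_one, add_zero, add_zero]
  have htr : (Matrix.trace ((Aᴴ * U - N * Gᴴ)ᴴ * M * (Aᴴ * U - N * Gᴴ))).re
      = (Matrix.trace (R₀ᴴ * M * R₀)).re + ∑ i, ∑ j, Complex.normSq (D j i) := by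
    rw [hRG, hexp, Matrix.trace_add, Complex.add_re, trace_conjTranspose_mul_self_re]
  have hnn0 : 0 ≤ (Matrix.trace (R₀ᴴ * M * R₀)).re :=
    (Complex.le_def.mp (trace_nonneg_of_posSemidef
      (hM.posSemidef.conjTranspose_mul_mul_same R₀))).1
  have hs : 0 ≤ ∑ i, ∑ j, Complex.normSq (D j i) :=
    Finset.sum_nonneg fun i _ => Finset.sum_nonneg fun j _ => Complex.normSq_nonneg _
  constructor
  · apply Real.sqrt_le_sqrt
    rw [htr]
    linarith
  · intro heq
    unfold frobM at heq
    rw [htr] at heq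
    have h0 : ∑ i, ∑ j, Complex.normSq (D j i) = 0 := by
      have h2 := congrArg (fun x => x ^ 2) heq
      simp only [Real.sq_sqrt (by linarith :
          (0:ℝ) ≤ (Matrix.trace (R₀ᴴ * M * R₀)).re + ∑ i, ∑ j, Complex.normSq (D j i)),
        Real.sq_sqrt hnn0] at h2
      linarith
    have hD0 : D = 0 := by
      ext i j
      have h4 := (Finset.sum_eq_zero_iff_of_nonneg (fun a _ =>
        Finset.sum_nonneg fun b _ => Complex.normSq_nonneg _)).mp h0 j (Finset.mem_univ j)
      have h5 := (Finset.sum_eq_zero_iff_of_nonneg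
        (fun a _ => Complex.normSq_nonneg _)).mp h4 i (Finset.mem_univ i)
      simpa using Complex.normSq_eq_zero.mp h5
    have h6 : Gᴴ = G₀ᴴ := (sub_eq_zero.mp (hD ▸ hD0 : G₀ᴴ - Gᴴ = 0)).symm
    exact conjTranspose_inj.mp h6
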